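/- Let n ≥ 1, let A be a linear isometric automorphism of Euclidean space ℝⁿ, let h : ℝⁿ → ℝ be continuous, and define recursively H₀(t, p) = h(p) and H_{k+1}(t, p) = h(p) + ∫₀ᵗ H_k(s, A⁻¹ p) ds. If r ≥ 0 and h(p) ≥ r for every p with ‖p‖ = 1, then for every m ≥ 0, every t ≥ 0 and every p with ‖p‖ = 1, H_m(t, p) ≥ r·Σ_{k=0}^{m} t^k/k!. -/

import Mathlib

open scoped BigOperators

/-- For a linear isometric automorphism `A` of `ℝⁿ`, continuous
`h : ℝⁿ → ℝ`, and the successive approximations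
`H₀(t,p) = h(p)`, `H_{k+1}(t,p) = h(p) + ∫₀ᵗ H_k(s, A⁻¹p) ds`, if `h ≥ r ≥ 0` on
the unit sphere then `H_m(t,p) ≥ r·Σ_{k=0}^{m} tᵏ/k!` for all `t ≥ 0`, `‖p‖ = 1`. -/
theorem stmt11 (n : ℕ) (hn : 1 ≤ n)
    (A : EuclideanSpace ℝ (Fin n) ≃ₗᵢ[ℝ] EuclideanSpace ℝ (Fin n))
    (h : EuclideanSpace ℝ (Fin n) → ℝ) (hcont : Continuous h)
    (H : ℕ → ℝ → EuclideanSpace ℝ (Fin n) → ℝ)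
    (hH0 : ∀ t p, H 0 t p = h p)
    (hHsucc : ∀ k t p, H (k + 1) t p = h p + ∫ s in (0 : ℝ)..t, H k s (A.symm p))
    (r : ℝ) (hr : 0 ≤ r) (hhr : ∀ p, ‖p‖ = 1 → r ≤ h p) :
    ∀ (m : ℕ) (t : ℝ), 0 ≤ t → ∀ p, ‖p‖ = 1 →
      r * ∑ k ∈ Finset.range (m + 1), t ^ k / (Nat.factorial k : ℝ) ≤ H m t p := by
  -- continuity of H k in t
  have hcontH : ∀ k q, Continuous (fun s => H k s q) := by
    intro k
    induction k with
    | zero =>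
      intro q
      simpa only [hH0] using continuous_const
    | succ k ih =>
      intro q
      have heq : (fun s => H (k + 1) s q)
          = fun s => h q + ∫ x in (0 : ℝ)..s, H k x (A.symm q) := by
        funext s; exact hHsucc k s q
      rw [heq]
      exact continuous_const.add
        (intervalIntegral.continuous_primitive
          (fun a b => ((ih (A.symm q)).intervalIntegrable a b)) 0)
  intro m
  induction m with
  | zero =>
    intro t ht p hp
    have := hhr p hp
    rw [hH0]
    norm_num
    linarith
  | succ m ih =>
    intro t ht p hp
    rw [hHsucc]
    have hq : ‖A.symm p‖ = 1 := by rw [A.symm.norm_map]; exact hp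
    have hmono : (∫ s in (0 : ℝ)..t,
          r * ∑ k ∈ Finset.range (m + 1), s ^ k / (Nat.factorial k : ℝ))
        ≤ ∫ s in (0 : ℝ)..t, H m s (A.symm p) := by
      apply intervalIntegral.integral_mono_on ht
      · exact (by fun_prop : Continuous fun s : ℝ =>
          r * ∑ k ∈ Finset.range (m + 1), s ^ k / (Nat.factorial k : ℝ)).intervalIntegrable 0 t
      · exact (hcontH m (A.symm p)).intervalIntegrable 0 t
      · intro s hs
        exact ih s hs.1 (A.symm p) hq
    have hval : (∫ s in (0 : ℝ)..t,
          r * ∑ k ∈ Finset.range (m + 1), s ^ k / (Nat.factorial k : ℝ))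
        = r * ∑ k ∈ Finset.range (m + 1), t ^ (k + 1) / (Nat.factorial (k + 1) : ℝ) := by
      rw [intervalIntegral.integral_const_mul]
      congr 1
      rw [intervalIntegral.integral_finset_sum]
      · apply Finset.sum_congr rfl
        intro k _
        rw [intervalIntegral.integral_div, integral_pow]
        have hk : (Nat.factorial (k + 1) : ℝ) = (k + 1) * Nat.factorial k := by
          push_cast [Nat.factorial_succ]; ring
        rw [hk]
        have h1 : (0 : ℝ) < (k : ℝ) + 1 := by positivity
        have h2 : (0 : ℝ) < (Nat.factorial k : ℝ) := by positivity
        field_simp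
        simp
      · intro k _
        exact (by fun_prop : Continuous fun s : ℝ =>
          s ^ k / (Nat.factorial k : ℝ)).intervalIntegrable 0 t
    have hsum : ∑ k ∈ Finset.range (m + 1 + 1), t ^ k / (Nat.factorial k : ℝ)
        = (∑ k ∈ Finset.range (m + 1), t ^ (k + 1) / (Nat.factorial (k + 1) : ℝ)) + 1 := by
      rw [Finset.sum_range_succ']
      simp
    rw [hsum, mul_add, mul_one]
    have := hhr p hp
    rw [hval] at hmono
    linarith
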